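/- Let n and i be natural numbers with i ≤ n, and let φ be a real-valued function on the binary words of length n that is not identically zero and satisfies, for every word x, (n − 2i)·φ(x) = Σ_{y : d_H(x,y) = 1} φ(y) (i.e., φ is an eigenfunction of the n-cube with eigenvalue n − 2i). Then for every binary word x of length n, φ(x + 1^n) = (−1)^i · φ(x), where 1^n denotes the all-one word of length n. -/

import Mathlib

def cubeE {n : ℕ} (j : Fin n) : Fin n → ZMod 2 := fun k => if k = j then 1 else 0

set_option linter.unnecessarySeqFocus false in
lemma zmod2_ne_iff (a b : ZMod 2) : a ≠ b ↔ b = a + 1 := by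
  revert a b; decide

lemma cubeE_inj {n : ℕ} : Function.Injective (cubeE (n := n)) := by
  intro j j' h
  by_contra hne
  have := congrFun h j
  simp only [cubeE, if_pos rfl, if_neg hne] at this
  exact one_ne_zero this

lemma nbhd_eq_image {n : ℕ} (x : Fin n → ZMod 2) :
    Finset.univ.filter (fun y => hammingDist x y = 1)
      = Finset.image (fun j => x + cubeE j) Finset.univ := by
  ext y
  simp only [Finset.mem_filter, Finset.mem_univ, true_and, Finset.mem_image]
  constructor
  · intro hy
    rw [hammingDist, Finset.card_eq_one] at hy
    obtain ⟨j, hj⟩ := hy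
    refine ⟨j, ?_⟩
    funext k
    have hmem : ∀ k, x k ≠ y k ↔ k ∈ ({j} : Finset (Fin n)) := by
      intro k
      rw [← hj]; simp
    by_cases hk : k = j
    · subst hk
      have : x k ≠ y k := by rw [hmem]; simp
      rw [zmod2_ne_iff] at this
      simp [this, cubeE, Pi.add_apply]
    · have : ¬ x k ≠ y k := by rw [hmem]; simpa using hk
      push_neg at this
      simp [cubeE, hk, Pi.add_apply, ← this]
  · rintro ⟨j, rfl⟩
    rw [hammingDist]
    rw [show ({k | x k ≠ (x + cubeE j) k} : Finset (Fin n)) = {j} from ?_]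
    · simp
    · ext k
      simp only [Finset.mem_filter, Finset.mem_univ, true_and, Finset.mem_singleton,
        Pi.add_apply, cubeE]
      by_cases hk : k = j <;> simp [hk]

noncomputable def cubeChi {n : ℕ} (S x : Fin n → ZMod 2) : ℝ :=
  ∏ j, (-1 : ℝ) ^ ((x j * S j).val)

lemma neg_one_val_add (a b : ZMod 2) :
    (-1 : ℝ) ^ ((a + b).val) = (-1 : ℝ) ^ a.val * (-1 : ℝ) ^ b.val := by
  rcases (show a = 0 ∨ a = 1 by revert a; decide) with rfl | rfl <;>
  rcases (show b = 0 ∨ b = 1 by revert b; decide) with rfl | rfl <;>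
    norm_num [show ZMod.val (0 : ZMod 2) = 0 from rfl,
      show ZMod.val (1 : ZMod 2) = 1 from rfl, show ZMod.val (2 : ZMod 2) = 0 from rfl]

lemma neg_one_val_eq (a : ZMod 2) : (-1 : ℝ) ^ a.val = 1 - 2 * (a.val : ℝ) := by
  rcases (show a = 0 ∨ a = 1 by revert a; decide) with rfl | rfl <;>
    norm_num [show ZMod.val (0 : ZMod 2) = 0 from rfl,
      show ZMod.val (1 : ZMod 2) = 1 from rfl]

lemma cubeChi_add {n : ℕ} (S x y : Fin n → ZMod 2) :
    cubeChi S (x + y) = cubeChi S x * cubeChi S y := by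
  rw [cubeChi, cubeChi, cubeChi, ← Finset.prod_mul_distrib]
  refine Finset.prod_congr rfl fun j _ => ?_
  have : (x + y) j * S j = x j * S j + y j * S j := by simp [add_mul]
  rw [this, neg_one_val_add]

lemma sum_zmod2 (f : ZMod 2 → ℝ) : ∑ s : ZMod 2, f s = f 0 + f 1 := by
  rw [show (Finset.univ : Finset (ZMod 2)) = {0, 1} by decide]
  simp

/-- Orthogonality-type sum: `∑_S χ_S(z) = 2^n` if `z = 0`, else `0`. -/
lemma cubeChi_sum {n : ℕ} (z : Fin n → ZMod 2) :
    ∑ S : Fin n → ZMod 2, cubeChi S z = if z = 0 then (2 : ℝ) ^ n else 0 := by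
  have h1 : ∑ S : Fin n → ZMod 2, cubeChi S z
      = ∏ j, ∑ s : ZMod 2, (-1 : ℝ) ^ ((z j * s).val) := by
    rw [Finset.prod_univ_sum]
    simp [cubeChi, Fintype.piFinset_univ]
  rw [h1]
  by_cases hz : z = 0
  · subst hz
    simp [sum_zmod2]
  · obtain ⟨j, hj⟩ : ∃ j, z j ≠ 0 := by
      by_contra h
      push_neg at h
      exact hz (funext h)
    rw [if_neg hz]
    apply Finset.prod_eq_zero (Finset.mem_univ j)
    have hz1 : z j = 1 := by
      revert hj; generalize z j = a; revert a; decide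
    rw [hz1, sum_zmod2]
    norm_num [show ZMod.val (0 : ZMod 2) = 0 from rfl,
      show ZMod.val (1 : ZMod 2) = 1 from rfl]

lemma add_eq_zero_iff_zmod2 {n : ℕ} (x y : Fin n → ZMod 2) : x + y = 0 ↔ x = y := by
  constructor
  · intro h
    funext k
    have := congrFun h k
    simp only [Pi.add_apply, Pi.zero_apply] at this
    revert this; generalize x k = a; generalize y k = b; revert a b; decide
  · rintro rfl
    funext k
    simp only [Pi.add_apply, Pi.zero_apply]
    generalize x k = a; revert a; decide

lemma cubeChi_e {n : ℕ} (S : Fin n → ZMod 2) (j : Fin n) :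
    cubeChi S (cubeE j) = (-1 : ℝ) ^ ((S j).val) := by
  rw [cubeChi]
  rw [Finset.prod_eq_single j]
  · simp [cubeE]
  · intro k _ hk
    simp [cubeE, hk, show ZMod.val (0 : ZMod 2) = 0 from rfl]
  · simp

lemma cubeChi_ones {n : ℕ} (S : Fin n → ZMod 2) :
    cubeChi S (fun _ => (1 : ZMod 2)) = (-1 : ℝ) ^ (∑ j, (S j).val) := by
  rw [cubeChi, ← Finset.prod_pow_eq_pow_sum]
  simp

lemma pi_add_add_cancel {n : ℕ} (x v : Fin n → ZMod 2) : x + v + v = x := by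
  funext k
  simp only [Pi.add_apply]
  generalize x k = a; generalize v k = b; revert a b; decide

/-- An eigenfunction of the `n`-cube with eigenvalue `n - 2i`
satisfies `φ(x + 1^n) = (-1)^i φ(x)`. -/
theorem stmt_0 (n i : ℕ) (hi : i ≤ n) (φ : (Fin n → ZMod 2) → ℝ)
    (hnz : ∃ x, φ x ≠ 0)
    (heig : ∀ x : Fin n → ZMod 2,
      ((n : ℝ) - 2 * i) * φ x =
        ∑ y ∈ Finset.univ.filter (fun y => hammingDist x y = 1), φ y) :
    ∀ x : Fin n → ZMod 2, φ (x + fun _ => (1 : ZMod 2)) = (-1 : ℝ) ^ i * φ x := by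
  classical
  set c : (Fin n → ZMod 2) → ℝ := fun S => ∑ y, cubeChi S y * φ y with hc
  have hnbhd : ∀ (x : Fin n → ZMod 2) (f : (Fin n → ZMod 2) → ℝ),
      ∑ y ∈ Finset.univ.filter (fun y => hammingDist x y = 1), f y
        = ∑ j : Fin n, f (x + cubeE j) := by
    intro x f
    rw [nbhd_eq_image, Finset.sum_image]
    intro j _ j' _ h
    exact cubeE_inj (by simpa using add_left_cancel h)
  -- Step A: Fourier support of φ lies in weight-i characters
  have hsupp : ∀ S : Fin n → ZMod 2, c S ≠ 0 → (∑ j, (S j).val) = i := by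
    intro S hS
    have key : ((n : ℝ) - 2 * i) * c S = ((n : ℝ) - 2 * (∑ j, (S j).val)) * c S := by
      calc ((n : ℝ) - 2 * i) * c S
          = ∑ x, cubeChi S x * (((n : ℝ) - 2 * i) * φ x) := by
            rw [hc, Finset.mul_sum]
            exact Finset.sum_congr rfl fun x _ => by ring
        _ = ∑ x, ∑ j, cubeChi S x * φ (x + cubeE j) := by
            refine Finset.sum_congr rfl fun x _ => ?_
            rw [heig x, hnbhd x φ, Finset.mul_sum]
        _ = ∑ j, ∑ x, cubeChi S x * φ (x + cubeE j) := Finset.sum_comm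
        _ = ∑ j : Fin n, (-1 : ℝ) ^ ((S j).val) * c S := by
            refine Finset.sum_congr rfl fun j _ => ?_
            have := Equiv.sum_comp (Equiv.addRight (cubeE j))
              (fun x => cubeChi S (x + cubeE j) * φ x)
            simp only [Equiv.coe_addRight] at this
            calc ∑ x, cubeChi S x * φ (x + cubeE j)
                = ∑ x, cubeChi S (x + cubeE j + cubeE j) * φ (x + cubeE j) := by
                  refine Finset.sum_congr rfl fun x _ => ?_
                  rw [pi_add_add_cancel]
              _ = ∑ x, cubeChi S (x + cubeE j) * φ x := this
              _ = (-1 : ℝ) ^ ((S j).val) * c S := by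
                  rw [hc, Finset.mul_sum]
                  refine Finset.sum_congr rfl fun x _ => ?_
                  rw [cubeChi_add, cubeChi_e]; ring
        _ = ((n : ℝ) - 2 * (∑ j, (S j).val)) * c S := by
            rw [← Finset.sum_mul]
            congr 1
            have : ∀ j : Fin n, (-1 : ℝ) ^ ((S j).val) = 1 - 2 * ((S j).val : ℝ) :=
              fun j => neg_one_val_eq (S j)
            rw [Finset.sum_congr rfl fun j _ => this j]
            push_cast
            rw [Finset.sum_sub_distrib, ← Finset.mul_sum]
            simp [mul_comm]
    have h1 : ((n : ℝ) - 2 * i) = ((n : ℝ) - 2 * (∑ j, (S j).val)) :=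
      mul_right_cancel₀ hS key
    have h2 : ((∑ j, (S j).val : ℕ) : ℝ) = (i : ℝ) := by push_cast at h1 ⊢; linarith
    exact_mod_cast h2
  -- Step B: Fourier inversion
  have hinv : ∀ x : Fin n → ZMod 2, ∑ S, cubeChi S x * c S = (2 : ℝ) ^ n * φ x := by
    intro x
    calc ∑ S, cubeChi S x * c S
        = ∑ S, ∑ y, cubeChi S (x + y) * φ y := by
          refine Finset.sum_congr rfl fun S _ => ?_
          rw [hc, Finset.mul_sum]
          exact Finset.sum_congr rfl fun y _ => by rw [cubeChi_add]; ring
      _ = ∑ y, (∑ S, cubeChi S (x + y)) * φ y := by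
          rw [Finset.sum_comm]
          exact Finset.sum_congr rfl fun y _ => by rw [Finset.sum_mul]
      _ = ∑ y, (if x = y then (2 : ℝ) ^ n else 0) * φ y := by
          refine Finset.sum_congr rfl fun y _ => ?_
          simp only [cubeChi_sum, add_eq_zero_iff_zmod2]
      _ = (2 : ℝ) ^ n * φ x := by
          simp [ite_mul, Finset.sum_ite_eq]
  -- Conclusion
  intro x
  have h2n : (2 : ℝ) ^ n ≠ 0 := by positivity
  have e1 : (2 : ℝ) ^ n * φ (x + fun _ => (1 : ZMod 2))
      = (-1 : ℝ) ^ i * ((2 : ℝ) ^ n * φ x) := by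
    rw [← hinv (x + fun _ => (1 : ZMod 2)), ← hinv x, Finset.mul_sum]
    refine Finset.sum_congr rfl fun S _ => ?_
    rw [cubeChi_add, cubeChi_ones]
    by_cases hS : c S = 0
    · simp [hS]
    · rw [hsupp S hS]; ring
  have e2 : (2 : ℝ) ^ n * φ (x + fun _ => (1 : ZMod 2))
      = (2 : ℝ) ^ n * ((-1 : ℝ) ^ i * φ x) := by rw [e1]; ring
  exact mul_left_cancel₀ h2n e2
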